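/- Let ρ be a density operator on ℂ^{d_O} ⊗ ℂ^{d_A}. There exists a unitary U on ℂ^{d_O} ⊗ ℂ^{d_A} and a unit vector |φ_1⟩ ∈ ℂ^{d_O} such that Tr_A[UρU†] = |φ_1⟩⟨φ_1| if and only if rank(ρ) ≤ d_A. -/

import Mathlib

open Finset Matrix
open scoped ComplexOrder

/-- The rank-one projector `|x⟩⟨x|`. -/
noncomputable def outer {n : Type*} (x : n → ℂ) : Matrix n n ℂ :=
  Matrix.of fun a b => x a * star (x b)

/-- Partial trace over the second (auxiliary) factor. -/
noncomputable def ptraceA {dO dA : ℕ}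
    (M : Matrix (Fin dO × Fin dA) (Fin dO × Fin dA) ℂ) :
    Matrix (Fin dO) (Fin dO) ℂ :=
  Matrix.of fun i j => ∑ k : Fin dA, M (i, k) (j, k)

noncomputable def Phi {dO dA : ℕ} (φ1 : Fin dO → ℂ) :
    ((Fin dO × Fin dA) → ℂ) →ₗ[ℂ] (Fin dA → ℂ) where
  toFun x := fun k => ∑ i, star (φ1 i) * x (i, k)
  map_add' x y := by funext k; simp [mul_add, Finset.sum_add_distrib]
  map_smul' c x := by
    funext k
    simp only [Pi.smul_apply, smul_eq_mul, RingHom.id_apply, Finset.mul_sum]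
    exact Finset.sum_congr rfl fun i _ => by ring

lemma Phi_surj {dO dA : ℕ} (φ1 : Fin dO → ℂ) (hφ : star φ1 ⬝ᵥ φ1 = 1) :
    Function.Surjective (Phi (dA := dA) φ1) := by
  intro c
  refine ⟨fun p => c p.2 * φ1 p.1, ?_⟩
  funext k
  simp only [Phi, LinearMap.coe_mk, AddHom.coe_mk]
  have h1 : ∑ i, star (φ1 i) * φ1 i = 1 := by simpa [dotProduct] using hφ
  calc ∑ i, star (φ1 i) * (c k * φ1 i) = c k * ∑ i, star (φ1 i) * φ1 i := by
        rw [Finset.mul_sum]; exact Finset.sum_congr rfl fun i _ => by ring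
    _ = c k := by rw [h1, mul_one]

lemma slice_ker {dO dA : ℕ} {M : Matrix (Fin dO × Fin dA) (Fin dO × Fin dA) ℂ}
    (hM : M.PosSemidef) {φ1 : Fin dO → ℂ} (hpt : ptraceA M = outer φ1)
    (v : Fin dO → ℂ) (hv : ∑ j, star (φ1 j) * v j = 0) (k : Fin dA) :
    M *ᵥ (fun p => if p.2 = k then v p.1 else 0) = 0 := by
  set y : Fin dA → (Fin dO × Fin dA) → ℂ :=
    fun k p => if p.2 = k then v p.1 else 0 with hy
  have hterm : ∀ k, star (y k) ⬝ᵥ (M *ᵥ y k)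
      = ∑ i, star (v i) * ∑ j, M (i, k) (j, k) * v j := by
    intro k
    simp only [dotProduct, mulVec, Fintype.sum_prod_type, hy, Pi.star_apply,
      apply_ite (star : ℂ → ℂ), star_zero,
      mul_ite, ite_mul, mul_zero, zero_mul, Finset.sum_ite_eq', Finset.mem_univ,
      if_true]
  have hsum : ∑ k, star (y k) ⬝ᵥ (M *ᵥ y k) = 0 := by
    rw [Finset.sum_congr rfl fun k _ => hterm k, Finset.sum_comm]
    refine Finset.sum_eq_zero fun i _ => ?_
    have : ∑ k : Fin dA, star (v i) * ∑ j, M (i, k) (j, k) * v j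
        = star (v i) * ∑ j, (ptraceA M) i j * v j := by
      rw [← Finset.mul_sum]
      congr 1
      rw [Finset.sum_comm]
      exact Finset.sum_congr rfl fun j _ => by simp [ptraceA, Finset.sum_mul]
    rw [this, hpt]
    have h0 : ∑ j, (outer φ1) i j * v j = φ1 i * ∑ j, star (φ1 j) * v j := by
      rw [Finset.mul_sum]
      exact Finset.sum_congr rfl fun j _ => by simp [outer]; ring
    rw [h0, hv, mul_zero, mul_zero]
  have hnn : ∀ k ∈ Finset.univ, (0:ℂ) ≤ star (y k) ⬝ᵥ (M *ᵥ y k) :=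
    fun k _ => hM.dotProduct_mulVec_nonneg (y k)
  have hzero : star (y k) ⬝ᵥ (M *ᵥ y k) = 0 :=
    (Finset.sum_eq_zero_iff_of_nonneg hnn).mp hsum k (Finset.mem_univ k)
  exact (hM.dotProduct_mulVec_zero_iff (y k)).mp hzero

lemma ker_Phi_le {dO dA : ℕ} {M : Matrix (Fin dO × Fin dA) (Fin dO × Fin dA) ℂ}
    (hM : M.PosSemidef) {φ1 : Fin dO → ℂ} (hpt : ptraceA M = outer φ1) :
    LinearMap.ker (Phi (dA := dA) φ1) ≤ LinearMap.ker M.mulVecLin := by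
  intro x hx
  rw [LinearMap.mem_ker] at hx ⊢
  have hslice : ∀ k, ∑ i, star (φ1 i) * x (i, k) = 0 := fun k => congrFun hx k
  have hx_eq : x = ∑ k : Fin dA, (fun p : Fin dO × Fin dA => if p.2 = k then x (p.1, k) else 0) := by
    funext p
    simp [Finset.sum_apply, Finset.sum_ite_eq]
  rw [hx_eq, map_sum]
  refine Finset.sum_eq_zero fun k _ => ?_
  simpa [Matrix.mulVecLin_apply] using
    slice_ker hM hpt (fun i => x (i, k)) (hslice k) k

lemma rank_le_of_ptrace_pure {dO dA : ℕ}
    {M : Matrix (Fin dO × Fin dA) (Fin dO × Fin dA) ℂ}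
    (hM : M.PosSemidef) {φ1 : Fin dO → ℂ} (hφ : star φ1 ⬝ᵥ φ1 = 1)
    (hpt : ptraceA M = outer φ1) : M.rank ≤ dA := by
  have hker := ker_Phi_le hM hpt
  have hrn₁ := LinearMap.finrank_range_add_finrank_ker (Phi (dA := dA) φ1)
  have hrn₂ := LinearMap.finrank_range_add_finrank_ker M.mulVecLin
  have hdom : Module.finrank ℂ ((Fin dO × Fin dA) → ℂ) = dO * dA := by
    simp [Module.finrank_fintype_fun_eq_card]
  have hrange : Module.finrank ℂ (LinearMap.range (Phi (dA := dA) φ1)) = dA := by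
    rw [LinearMap.range_eq_top.mpr (Phi_surj φ1 hφ), finrank_top,
      Module.finrank_fintype_fun_eq_card, Fintype.card_fin]
  have hmono : Module.finrank ℂ (LinearMap.ker (Phi (dA := dA) φ1))
      ≤ Module.finrank ℂ (LinearMap.ker M.mulVecLin) :=
    Submodule.finrank_mono hker
  rw [hdom, hrange] at hrn₁
  rw [hdom] at hrn₂
  have : M.rank = Module.finrank ℂ (LinearMap.range M.mulVecLin) := rfl
  omega

lemma exists_unitary_of_rank_le {dO dA : ℕ} (hO : 0 < dO)
    (ρ : Matrix (Fin dO × Fin dA) (Fin dO × Fin dA) ℂ)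
    (hρ : ρ.PosSemidef) (htr : ρ.trace = 1) (h : ρ.rank ≤ dA) :
    ∃ U ∈ Matrix.unitaryGroup (Fin dO × Fin dA) ℂ,
      ∃ φ1 : Fin dO → ℂ, star φ1 ⬝ᵥ φ1 = 1 ∧
        ptraceA (U * ρ * Uᴴ) = outer φ1 := by
  classical
  set z : Fin dO := ⟨0, hO⟩ with hz
  have hH : ρ.IsHermitian := hρ.1
  set lam : Fin dO × Fin dA → ℝ := hH.eigenvalues with hlam
  set μ : Fin dO × Fin dA → ℂ := RCLike.ofReal ∘ hH.eigenvalues with hμ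
  set V : Matrix (Fin dO × Fin dA) (Fin dO × Fin dA) ℂ := (hH.eigenvectorUnitary : Matrix (Fin dO × Fin dA) (Fin dO × Fin dA) ℂ) with hV
  have hVmem : V ∈ Matrix.unitaryGroup (Fin dO × Fin dA) ℂ := hH.eigenvectorUnitary.2
  have hVV : V * star V = 1 := Matrix.mem_unitaryGroup_iff.mp hVmem
  -- the support finset
  set S : Finset (Fin dO × Fin dA) := Finset.univ.filter (fun p => lam p ≠ 0) with hS
  have hScard : S.card ≤ dA := by
    have h1 : ρ.rank = Fintype.card {p // lam p ≠ 0} := hH.rank_eq_card_non_zero_eigs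
    have h2 : Fintype.card {p // lam p ≠ 0} = S.card := Fintype.card_subtype _
    omega
  set T : Finset (Fin dO × Fin dA) := ({z} : Finset (Fin dO)) ×ˢ Finset.univ with hT
  have hTcard : T.card = dA := by simp [hT]
  obtain ⟨T', hT'sub, hT'card⟩ := Finset.exists_subset_card_eq (hScard.trans_eq hTcard.symm)
  have e : {x // x ∈ S} ≃ {x // x ∈ T'} := Finset.equivOfCardEq (hT'card.symm ▸ rfl)
  set π : Equiv.Perm (Fin dO × Fin dA) := e.extendSubtype with hπ
  have hkey : ∀ q : Fin dO × Fin dA, lam (π.symm q) ≠ 0 → q.1 = z := by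
    intro q hq
    have h1 : π.symm q ∈ S := Finset.mem_filter.mpr ⟨Finset.mem_univ _, hq⟩
    have h2 : π (π.symm q) ∈ T' := e.extendSubtype_mem _ h1
    rw [Equiv.apply_symm_apply] at h2
    have h3 := hT'sub h2
    simpa using (Finset.mem_product.mp h3).1
  -- the unitary
  set U : Matrix (Fin dO × Fin dA) (Fin dO × Fin dA) ℂ :=
    (star V).submatrix (⇑π.symm) id with hU
  have hUH : Uᴴ = V.submatrix id (⇑π.symm) := by
    simp [hU, Matrix.conjTranspose_submatrix, Matrix.star_eq_conjTranspose]
  have hUmem : U ∈ Matrix.unitaryGroup (Fin dO × Fin dA) ℂ := by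
    rw [Matrix.mem_unitaryGroup_iff']
    show Uᴴ * U = 1
    rw [hUH, hU, Matrix.submatrix_mul_equiv V (star V) id π.symm id, hVV,
      Matrix.submatrix_id_id]
  -- diagonal form of the conjugated state
  have hdiagN : U * ρ * Uᴴ = Matrix.diagonal (μ ∘ ⇑π.symm) := by
    have h1 : U * ρ = ((star V) * ρ).submatrix (⇑π.symm) id := by
      rw [hU, Matrix.submatrix_mul (star V) ρ (⇑π.symm) id id Function.bijective_id,
        Matrix.submatrix_id_id]
    have h2 : U * ρ * Uᴴ = ((star V) * ρ * V).submatrix (⇑π.symm) (⇑π.symm) := by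
      rw [h1, hUH,
        Matrix.submatrix_mul ((star V) * ρ) V (⇑π.symm) id (⇑π.symm) Function.bijective_id]
    rw [h2, (show star V * ρ * V = Matrix.diagonal μ by
      simpa [hV, hμ] using hH.conjStarAlgAut_star_eigenvectorUnitary),
      Matrix.submatrix_diagonal_equiv]
  -- the target pure state
  set φ1 : Fin dO → ℂ := fun i => if i = z then 1 else 0 with hφ1
  have hφ : star φ1 ⬝ᵥ φ1 = 1 := by
    simp [hφ1, dotProduct, apply_ite (star : ℂ → ℂ), ite_mul, Finset.sum_ite_eq']
  -- total sum of eigenvalues is one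
  have htrμ : ∑ p, μ p = 1 := by
    have h1 : star V * ρ * V = Matrix.diagonal μ := by
      simpa [hV, hμ] using hH.conjStarAlgAut_star_eigenvectorUnitary
    have h2 : (Matrix.diagonal μ).trace = ρ.trace := by
      rw [← h1, Matrix.trace_mul_cycle, hVV, one_mul]
    rw [← Matrix.trace_diagonal, h2, htr]
  refine ⟨U, hUmem, φ1, hφ, ?_⟩
  rw [hdiagN]
  ext i j
  simp only [ptraceA, Matrix.of_apply, Matrix.diagonal_apply, outer, Function.comp_apply]
  by_cases hij : i = j
  · subst hij
    simp only [Prod.mk.injEq, and_true, eq_self_iff_true, if_true, if_pos rfl]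
    by_cases hiz : i = z
    · have hzero : ∀ a : Fin dO, a ≠ z → ∀ k : Fin dA, μ (π.symm (a, k)) = 0 := by
        intro a ha k
        by_contra hne
        exact ha (hkey (a, k) (by simpa [hμ, hlam] using hne))
      have hsum1 : ∑ k : Fin dA, μ (π.symm (i, k)) = ∑ q : Fin dO × Fin dA, μ (π.symm q) := by
        rw [Fintype.sum_prod_type]
        rw [Finset.sum_eq_single i
          (fun a _ ha => Finset.sum_eq_zero fun k _ => hzero a (hiz ▸ ha) k)
          (fun hi => absurd (Finset.mem_univ i) hi)]
      have hsum2 : ∑ q : Fin dO × Fin dA, μ (π.symm q) = ∑ p, μ p :=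
        Equiv.sum_comp π.symm μ
      rw [hsum1, hsum2, htrμ]
      simp [hφ1, hiz]
    · have : ∀ k : Fin dA, μ (π.symm (i, k)) = 0 := by
        intro k
        by_contra hne
        exact hiz (hkey (i, k) (by simpa [hμ, hlam] using hne))
      rw [Finset.sum_eq_zero fun k _ => this k]
      simp [hφ1, hiz]
  · have hcond : ∀ k : Fin dA, ((i, k) : Fin dO × Fin dA) ≠ (j, k) := by
      intro k hk
      exact hij (congrArg Prod.fst hk)
    rw [Finset.sum_eq_zero fun k _ => by rw [if_neg (hcond k)]]
    have : ¬(i = z ∧ j = z) := fun ⟨h1, h2⟩ => hij (h1.trans h2.symm)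
    simp only [hφ1]
    by_cases h1 : i = z <;> by_cases h2 : j = z <;> simp_all

/-- **Rank criterion for full erasure with an auxiliary system**: a density
operator `ρ` on `ℂ^{d_O} ⊗ ℂ^{d_A}` admits a unitary `U` and a unit vector
`|φ_1⟩` with `Tr_A[UρU†] = |φ_1⟩⟨φ_1|` if and only if `rank ρ ≤ d_A`. -/
theorem full_erasure_iff_rank_le {dO dA : ℕ}
    (ρ : Matrix (Fin dO × Fin dA) (Fin dO × Fin dA) ℂ)
    (hρ : ρ.PosSemidef) (htr : ρ.trace = 1) :
    (∃ U ∈ Matrix.unitaryGroup (Fin dO × Fin dA) ℂ,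
      ∃ φ1 : Fin dO → ℂ, star φ1 ⬝ᵥ φ1 = 1 ∧
        ptraceA (U * ρ * Uᴴ) = outer φ1) ↔ ρ.rank ≤ dA := by
  constructor
  · rintro ⟨U, hU, φ1, hφ, hpt⟩
    have hM : (U * ρ * Uᴴ).PosSemidef := hρ.mul_mul_conjTranspose_same U
    have hrank : (U * ρ * Uᴴ).rank ≤ dA := rank_le_of_ptrace_pure hM hφ hpt
    have hU1 : U * star U = 1 := Matrix.mem_unitaryGroup_iff.mp hU
    have hU2 : star U * U = 1 := Matrix.mem_unitaryGroup_iff'.mp hU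
    rw [Matrix.star_eq_conjTranspose] at hU1 hU2
    have hdU : IsUnit U.det :=
      IsUnit.of_mul_eq_one _ (by rw [← Matrix.det_mul, hU1, Matrix.det_one])
    have hdUH : IsUnit (Uᴴ).det :=
      IsUnit.of_mul_eq_one _ (by rw [← Matrix.det_mul, hU2, Matrix.det_one])
    have heq : (U * ρ * Uᴴ).rank = ρ.rank := by
      rw [Matrix.rank_mul_eq_left_of_isUnit_det Uᴴ (U * ρ) hdUH,
        Matrix.rank_mul_eq_right_of_isUnit_det U ρ hdU]
    omega
  · intro h
    rcases Nat.eq_zero_or_pos dO with h0 | hpos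
    · exfalso
      subst h0
      simp [Matrix.trace] at htr
    · exact exists_unitary_of_rank_le hpos ρ hρ htr h
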